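/- Let n ≥ l ≥ 1 and let X₁, …, X_m be pairwise distinct nonzero elements of an integral domain, m ≥ 1. Then the ml×ml block binomial-power matrix A with blocks Aᵢ = [C(n+j−1, k−1)·Xᵢ^{j−1}]_{1≤k≤l, 1≤j≤ml} is invertible (has nonzero determinant). -/

import Mathlib

open Polynomial

/-- If the first `l` Taylor coefficients at `r` vanish, then `(X - C r)^l` divides `P`. -/
lemma dvd_of_taylor_coeff_eq_zero {K : Type*} [CommRing K] (P : K[X]) (r : K) (l : ℕ)
    (h : ∀ k < l, (Polynomial.taylor r P).coeff k = 0) :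
    (X - C r) ^ l ∣ P := by
  conv_rhs => rw [← sum_taylor_eq P r]
  rw [Polynomial.sum]
  apply Finset.dvd_sum
  intro i hi
  rcases lt_or_ge i l with hil | hil
  · rw [h i hil] ; simp
  · exact Dvd.dvd.mul_left (pow_dvd_pow _ hil) _

theorem det_block_binom_power_ne_zero {R : Type*} [CommRing R] [IsDomain R]
    (m n l : ℕ) (hm : 1 ≤ m) (hl : 1 ≤ l) (hn : l ≤ n) (X : Fin m → R)
    (hinj : Function.Injective X) (hne : ∀ i, X i ≠ 0) :
    Matrix.det (Matrix.of fun i j : Fin (m * l) =>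
      (((n + (j : ℕ)).choose ((i : ℕ) % l) : ℕ) : R) *
        X ⟨(i : ℕ) / l, Nat.div_lt_of_lt_mul (Nat.mul_comm m l ▸ i.isLt)⟩ ^ (j : ℕ))
    ≠ 0 := by
  classical
  intro hdet
  obtain ⟨v, hv, hmul⟩ := Matrix.exists_mulVec_eq_zero_iff.2 hdet
  -- polynomials
  set Q : R[X] := ∑ j : Fin (m * l), monomial (j : ℕ) (v j) with hQ
  have hQne : Q ≠ 0 := by
    obtain ⟨j0, hj0⟩ := Function.ne_iff.1 hv
    intro h0
    apply hj0
    have : Q.coeff (j0 : ℕ) = v j0 := by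
      rw [hQ, Polynomial.finset_sum_coeff]
      rw [Finset.sum_eq_single j0]
      · simp
      · intro b _ hb
        rw [Polynomial.coeff_monomial, if_neg]
        exact fun hc => hb (Fin.ext hc)
      · simp
    rw [h0] at this
    simpa using this.symm
  set P : R[X] := ∑ j : Fin (m * l), monomial (n + (j : ℕ)) (v j) with hP
  have hPQ : P = (Polynomial.X : R[X]) ^ n * Q := by
    rw [hP, hQ, Finset.mul_sum]
    refine Finset.sum_congr rfl fun j _ => ?_
    rw [← Polynomial.monomial_one_right_eq_X_pow, Polynomial.monomial_mul_monomial, one_mul]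
  have hPne : P ≠ 0 := by
    rw [hPQ]
    exact mul_ne_zero (pow_ne_zero _ Polynomial.X_ne_zero) hQne
  -- degree of Q
  have hQdeg : Q.natDegree < m * l := by
    have hd : Q.degree < ((m * l : ℕ) : WithBot ℕ) := by
      rw [hQ]
      apply lt_of_le_of_lt (Polynomial.degree_sum_le _ _)
      rw [Finset.sup_lt_iff (by exact WithBot.bot_lt_coe _)]
      intro j _
      exact lt_of_le_of_lt (Polynomial.degree_monomial_le _ _) (by exact_mod_cast j.isLt)
    exact (Polynomial.natDegree_lt_iff_degree_lt hQne).2 hd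
  -- key vanishing of Hasse derivatives
  have hroot : ∀ (q : Fin m) (k : ℕ), k < l →
      (Polynomial.hasseDeriv k P).eval (X q) = 0 := by
    intro q k hk
    have hkn : k ≤ n := (le_of_lt hk).trans hn
    have hilt : q * l + k < m * l := by
      have hq := q.isLt
      calc (q : ℕ) * l + k < (q : ℕ) * l + l := by omega
        _ = ((q : ℕ) + 1) * l := by ring
        _ ≤ m * l := Nat.mul_le_mul_right l (by omega)
    set i : Fin (m * l) := ⟨(q : ℕ) * l + k, hilt⟩ with hi
    have hmod : (i : ℕ) % l = k := by
      simp only [hi]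
      rw [Nat.add_comm, Nat.add_mul_mod_self_right]
      exact Nat.mod_eq_of_lt hk
    have hdiv : (i : ℕ) / l = (q : ℕ) := by
      simp only [hi]
      rw [Nat.add_comm, Nat.add_mul_div_right _ _ (by omega : 0 < l), Nat.div_eq_of_lt hk,
        Nat.zero_add]
    have hrow := congrFun hmul i
    simp only [Matrix.mulVec, dotProduct, Matrix.of_apply, Pi.zero_apply] at hrow
    have hXi : X ⟨(i : ℕ) / l, Nat.div_lt_of_lt_mul (Nat.mul_comm m l ▸ i.isLt)⟩ = X q := by
      congr 1
      exact Fin.ext hdiv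
    rw [hP, map_sum, Polynomial.eval_finset_sum]
    have : ∀ j : Fin (m * l),
        (Polynomial.hasseDeriv k (monomial (n + (j : ℕ)) (v j))).eval (X q)
          = X q ^ (n - k) * ((((n + (j : ℕ)).choose ((i : ℕ) % l) : ℕ) : R) *
              X ⟨(i : ℕ) / l, Nat.div_lt_of_lt_mul (Nat.mul_comm m l ▸ i.isLt)⟩ ^ (j : ℕ) * v j) := by
      intro j
      rw [Polynomial.hasseDeriv_monomial, Polynomial.eval_monomial, hXi, hmod]
      have he : n + (j : ℕ) - k = (n - k) + (j : ℕ) := by omega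
      rw [he, pow_add]
      push_cast
      ring
    rw [Finset.sum_congr rfl fun j _ => this j, ← Finset.mul_sum, hrow, mul_zero]
  -- divisibility by (X - C (X q))^l for each q
  have hdvd : ∀ q : Fin m, l ≤ Q.rootMultiplicity (X q) := by
    intro q
    have hdP : (Polynomial.X - C (X q)) ^ l ∣ P := by
      apply dvd_of_taylor_coeff_eq_zero
      intro k hk
      rw [Polynomial.taylor_coeff]
      exact hroot q k hk
    have hlP : l ≤ P.rootMultiplicity (X q) :=
      (Polynomial.le_rootMultiplicity_iff hPne).2 hdP
    have hsplit : P.rootMultiplicity (X q) =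
        ((Polynomial.X : R[X]) ^ n).rootMultiplicity (X q) + Q.rootMultiplicity (X q) := by
      rw [hPQ] at hPne ⊢
      exact Polynomial.rootMultiplicity_mul hPne
    have hXn : ((Polynomial.X : R[X]) ^ n).rootMultiplicity (X q) = 0 := by
      apply Polynomial.rootMultiplicity_eq_zero
      simp only [Polynomial.IsRoot, Polynomial.eval_pow, Polynomial.eval_X]
      exact pow_ne_zero _ (hne q)
    omega
  -- multiset of roots
  set M : Multiset R := ∑ q : Fin m, Multiset.replicate l (X q) with hM
  have hMle : M ≤ Q.roots := by
    rw [Multiset.le_iff_count]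
    intro a
    rw [hM, Multiset.count_sum']
    by_cases ha : ∃ q, X q = a
    · obtain ⟨q0, hq0⟩ := ha
      have : ∑ q : Fin m, (Multiset.replicate l (X q)).count a = l := by
        rw [Finset.sum_eq_single q0]
        · rw [Multiset.count_replicate, if_pos hq0]
        · intro b _ hb
          rw [Multiset.count_replicate, if_neg]
          intro hc
          exact hb (hinj (hc.trans hq0.symm))
        · simp
      rw [this, Polynomial.count_roots]
      exact hq0 ▸ hdvd q0
    · have : ∑ q : Fin m, (Multiset.replicate l (X q)).count a = 0 := by
        apply Finset.sum_eq_zero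
        intro q _
        rw [Multiset.count_replicate, if_neg (fun hc => ha ⟨q, hc⟩)]
      rw [this]
      exact Nat.zero_le _
  have hMcard : Multiset.card M = m * l := by
    rw [hM, Multiset.card_sum]
    simp [Finset.sum_const, Nat.mul_comm]
  have := (Multiset.card_le_card hMle).trans (Q.card_roots' )
  omega
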